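/- With h(x,t) = c₁+sin(x+t), u(x,t) = (c₁+sin(x+t))⁻¹ − 1, c₁ > 1, g > 0, k_H ∈ ℝ, and h_B satisfying ∂h_B/∂x = cos(x+t) − (k_H/g)·(sin(x+t)(sin(x+t)+c₁)+cos²(x+t))/(sin(x+t)+c₁)³ − (1/g)·cos(x+t)/(c₁+sin(x+t))³, the Navier–Stokes momentum equation ∂(hu)/∂t + ∂(hu²)/∂x = k_H ∂(h ∂u/∂x)/∂x − h g ∂h_E/∂x with h_E = h − h_B holds for all x, t ∈ ℝ. -/

import Mathlib

/-- The Navier–Stokes momentum equation holds for the trigonometric solution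
with a bathymetry h_B whose x-derivative is the stated expression. -/
theorem stmt_8 (c₁ g k_H : ℝ) (hc : 1 < c₁) (hg : 0 < g)
    (h u h_B h_E : ℝ → ℝ → ℝ)
    (hh : ∀ x t, h x t = c₁ + Real.sin (x + t))
    (hu : ∀ x t, u x t = (c₁ + Real.sin (x + t))⁻¹ - 1)
    (hBdiff : ∀ x t, DifferentiableAt ℝ (fun y => h_B y t) x)
    (hBx : ∀ x t, deriv (fun y => h_B y t) x =
      Real.cos (x + t)
        - (k_H / g) * (Real.sin (x + t) * (Real.sin (x + t) + c₁)
            + Real.cos (x + t) ^ 2) / (Real.sin (x + t) + c₁) ^ 3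
        - (1 / g) * (Real.cos (x + t) / (c₁ + Real.sin (x + t)) ^ 3))
    (hE : ∀ x t, h_E x t = h x t - h_B x t) :
    ∀ x t : ℝ,
      deriv (fun τ => h x τ * u x τ) t
        + deriv (fun y => h y t * u y t ^ 2) x =
      k_H * deriv (fun y => h y t * deriv (fun z => u z t) y) x
        - h x t * g * deriv (fun y => h_E y t) x := by
  intro x t
  have hpos : ∀ s : ℝ, (0:ℝ) < c₁ + Real.sin s := fun s => by
    have := Real.neg_one_le_sin s; linarith
  have hne : ∀ s : ℝ, c₁ + Real.sin s ≠ 0 := fun s => (hpos s).ne'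
  -- derivative in space of P y = c₁ + sin (y + t)
  have hP : ∀ y : ℝ, HasDerivAt (fun z => c₁ + Real.sin (z + t)) (Real.cos (y + t)) y := by
    intro y
    have h1 : HasDerivAt (fun z : ℝ => z + t) 1 y := (hasDerivAt_id y).add_const t
    simpa using h1.sin.const_add c₁
  have hC : ∀ y : ℝ, HasDerivAt (fun z => Real.cos (z + t)) (-Real.sin (y + t)) y := by
    intro y
    have h1 : HasDerivAt (fun z : ℝ => z + t) 1 y := (hasDerivAt_id y).add_const t
    simpa using h1.cos
  -- derivative in time of Q τ = c₁ + sin (x + τ)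
  have hQ : HasDerivAt (fun σ => c₁ + Real.sin (x + σ)) (Real.cos (x + t)) t := by
    have h1 : HasDerivAt (fun σ : ℝ => x + σ) 1 t := (hasDerivAt_id t).const_add x
    simpa using h1.sin.const_add c₁
  -- term 1
  have e1 : (fun τ => h x τ * u x τ) = fun τ => 1 - (c₁ + Real.sin (x + τ)) := by
    funext τ
    rw [hh, hu]
    have := hne (x + τ)
    field_simp
  have d1 : deriv (fun τ => h x τ * u x τ) t = -Real.cos (x + t) := by
    rw [e1]
    simpa using (hQ.const_sub 1).deriv
  -- term 2
  have e2 : (fun y => h y t * u y t ^ 2)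
      = fun y => (c₁ + Real.sin (y + t))⁻¹ - 2 + (c₁ + Real.sin (y + t)) := by
    funext y
    rw [hh, hu]
    have := hne (y + t)
    field_simp
    ring
  have d2 : deriv (fun y => h y t * u y t ^ 2) x
      = -Real.cos (x + t) / (c₁ + Real.sin (x + t)) ^ 2 + Real.cos (x + t) := by
    rw [e2]
    exact ((((hP x).inv (hne (x + t))).sub_const 2).add (hP x)).deriv
  -- inner derivative of u
  have du : ∀ y : ℝ, deriv (fun z => u z t) y
      = -Real.cos (y + t) / (c₁ + Real.sin (y + t)) ^ 2 := by
    intro y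
    have e3 : (fun z => u z t) = fun z => (c₁ + Real.sin (z + t))⁻¹ - 1 := by
      funext z; rw [hu]
    rw [e3]
    exact (((hP y).inv (hne (y + t))).sub_const 1).deriv
  -- term 3
  have e4 : (fun y => h y t * deriv (fun z => u z t) y)
      = fun y => -Real.cos (y + t) * (c₁ + Real.sin (y + t))⁻¹ := by
    funext y
    rw [hh, du]
    have := hne (y + t)
    field_simp
  have d4 : deriv (fun y => h y t * deriv (fun z => u z t) y) x
      = Real.sin (x + t) * (c₁ + Real.sin (x + t))⁻¹
        + -Real.cos (x + t) * (-Real.cos (x + t) / (c₁ + Real.sin (x + t)) ^ 2) := by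
    rw [e4]
    simpa [Pi.mul_def, Pi.inv_def] using ((hC x).neg.mul ((hP x).inv (hne (x + t)))).deriv
  -- term 4
  have d5 : deriv (fun y => h_E y t) x
      = Real.cos (x + t) - deriv (fun y => h_B y t) x := by
    have e5 : (fun y => h_E y t) = fun y => (c₁ + Real.sin (y + t)) - h_B y t := by
      funext y; rw [hE, hh]
    rw [e5, deriv_fun_sub (hP x).differentiableAt (hBdiff x t), (hP x).deriv]
  rw [d1, d2, d4, d5, hBx, hh]
  have h1 := hne (x + t)
  have h2 : Real.sin (x + t) + c₁ ≠ 0 := by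
    have := hpos (x + t); intro hcon; apply h1; linarith
  field_simp
  ring
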